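/- Let C_h denote the rooted complete d-ary tree of height h-1 (C_1 is a single vertex; the root of C_h has d branches equal to C_{h-1}). Then τ(S(C_h), x) < τ(S(C_{h-1}), x) for all h ≥ 2 and all x > 0. -/

import Mathlib

/-- A rooted tree: a root node together with a list of branches (rooted subtrees). -/
inductive RTree : Type
  | node : List RTree → RTree

namespace RTree

/-- Auxiliary fold: from the list of pairs `(M0 Tᵢ x, M Tᵢ x)` of the branches,
compute `(∏ᵢ M(Tᵢ,x), Σⱼ M0(Tⱼ,x) ∏_{i≠j} M(Tᵢ,x))`. -/
def comb : List (ℝ × ℝ) → ℝ × ℝ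
  | [] => (1, 0)
  | (m0, m) :: rest =>
    let pr := comb rest
    (m * pr.1, m0 * pr.1 + m * pr.2)

/-- `MM T x = (M₀(T,x), M₁(T,x))`: generating functions of matchings of `T`
not saturating / saturating the root. -/
def MM : RTree → ℝ → ℝ × ℝ
  | .node ts, x =>
    let pr := comb (ts.attach.map fun t =>
      let q := MM t.1 x
      (q.1, q.1 + q.2))
    (pr.1, x * pr.2)
  decreasing_by have := List.sizeOf_lt_of_mem t.2; simp only [RTree.node.sizeOf_spec]; omega

/-- Generating function of matchings not saturating the root. -/
def M0 (t : RTree) (x : ℝ) : ℝ := (MM t x).1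

/-- Generating function of matchings saturating the root. -/
def M1 (t : RTree) (x : ℝ) : ℝ := (MM t x).2

/-- The matching generating function `M(T,x) = M₀(T,x) + M₁(T,x)`. -/
def M (t : RTree) (x : ℝ) : ℝ := M0 t x + M1 t x

/-- `τ(T,x) = M₀(T,x)/M(T,x)`. -/
noncomputable def tau (t : RTree) (x : ℝ) : ℝ := M0 t x / M t x

/-- The subdivision tree: insert a new vertex in every edge. -/
def subdiv : RTree → RTree
  | .node ts => .node (ts.attach.map fun t => .node [subdiv t.1])
  decreasing_by have := List.sizeOf_lt_of_mem t.2; simp only [RTree.node.sizeOf_spec]; omega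

/-- Number of vertices. -/
def order : RTree → ℕ
  | .node ts => 1 + (ts.attach.map fun t => order t.1).sum
  decreasing_by have := List.sizeOf_lt_of_mem t.2; simp only [RTree.node.sizeOf_spec]; omega

end RTree

namespace RTree
/-- `C d h` is the rooted complete d-ary tree `C_{h+1}` of the paper (height `h`):
`C d 0` is a single vertex and the root of `C d (h+1)` has `d` branches `C d h`. -/
def C (d : ℕ) : ℕ → RTree
  | 0 => .node []
  | h + 1 => .node (List.replicate d (C d h))
end RTree

namespace RTree

lemma comb_replicate (n : ℕ) (m0 m : ℝ) :
    comb (List.replicate n (m0, m)) = (m ^ n, n * m0 * m ^ (n - 1)) := by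
  induction n with
  | zero => simp [comb]
  | succ k ih =>
    rw [List.replicate_succ, comb, ih]
    cases k with
    | zero => simp [pow_succ]
    | succ j =>
      simp only [Nat.add_sub_cancel, Prod.mk.injEq]
      constructor
      · rw [pow_succ]; ring
      · push_cast
        rw [pow_succ]
        ring

lemma subdiv_node (ts : List RTree) :
    subdiv (.node ts) = .node (ts.map fun t => .node [subdiv t]) := by
  rw [subdiv]
  congr 1
  exact List.attach_map_val (l := ts) (f := fun y => RTree.node [subdiv y])

lemma MM_node' (ts : List RTree) (x : ℝ) :
    MM (.node ts) x =
      (let pr := comb (ts.map fun t => ((MM t x).1, (MM t x).1 + (MM t x).2));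
       (pr.1, x * pr.2)) := by
  rw [MM]
  have : (ts.attach.map fun t => let q := MM t.1 x; (q.1, q.1 + q.2))
      = ts.map fun t => ((MM t x).1, (MM t x).1 + (MM t x).2) :=
    List.attach_map_val (l := ts) (f := fun y => ((MM y x).1, (MM y x).1 + (MM y x).2))
  rw [this]

lemma MM_subdiv_C_succ (d h : ℕ) (x : ℝ) :
    MM (subdiv (C d (h + 1))) x =
      ((M (subdiv (C d h)) x + x * M0 (subdiv (C d h)) x) ^ d,
       x * (d * M (subdiv (C d h)) x *
         (M (subdiv (C d h)) x + x * M0 (subdiv (C d h)) x) ^ (d - 1))) := by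
  have hC : C d (h + 1) = .node (List.replicate d (C d h)) := rfl
  rw [hC, subdiv_node, List.map_replicate, MM_node', List.map_replicate]
  have hbr : MM (RTree.node [subdiv (C d h)]) x
      = (M (subdiv (C d h)) x, x * M0 (subdiv (C d h)) x) := by
    rw [MM_node']
    simp [comb, M, M0, M1]
  rw [hbr]
  simp only [comb_replicate]

lemma MM_subdiv_C_zero (d : ℕ) (x : ℝ) : MM (subdiv (C d 0)) x = (1, 0) := by
  have : subdiv (C d 0) = .node [] := by rw [show C d 0 = .node [] from rfl, subdiv_node]; rfl
  rw [this, MM_node']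
  simp [comb]

lemma A_pos_B_pos (d : ℕ) (x : ℝ) (hx : 0 < x) (h : ℕ) :
    0 < M0 (subdiv (C d h)) x ∧ M0 (subdiv (C d h)) x ≤ M (subdiv (C d h)) x := by
  induction h with
  | zero => simp [M0, M, M1, MM_subdiv_C_zero]
  | succ k ih =>
    obtain ⟨hA, hAB⟩ := ih
    have hB : 0 < M (subdiv (C d k)) x := lt_of_lt_of_le hA hAB
    have hQ : 0 < M (subdiv (C d k)) x + x * M0 (subdiv (C d k)) x := by positivity
    constructor
    · show 0 < (MM (subdiv (C d (k+1))) x).1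
      rw [MM_subdiv_C_succ]
      positivity
    · show (MM (subdiv (C d (k+1))) x).1 ≤ M0 _ x + M1 _ x
      have e1 : ((subdiv (C d k)).MM x).1 = M0 (subdiv (C d k)) x := rfl
      simp only [M0, M1, MM_subdiv_C_succ]
      rw [e1]
      have h2 : 0 ≤ x * (↑d * M (subdiv (C d k)) x *
          (M (subdiv (C d k)) x + x * M0 (subdiv (C d k)) x) ^ (d - 1)) := by positivity
      linarith

lemma M0_succ (d h : ℕ) (x : ℝ) :
    M0 (subdiv (C d (h+1))) x =
      (M (subdiv (C d h)) x + x * M0 (subdiv (C d h)) x) ^ d := by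
  simp only [M0, MM_subdiv_C_succ]

lemma M_succ (d h : ℕ) (x : ℝ) :
    M (subdiv (C d (h+1))) x =
      (M (subdiv (C d h)) x + x * M0 (subdiv (C d h)) x) ^ d
      + x * (d * M (subdiv (C d h)) x *
        (M (subdiv (C d h)) x + x * M0 (subdiv (C d h)) x) ^ (d - 1)) := by
  simp only [M, M0, M1, MM_subdiv_C_succ]

lemma pow_eq (d : ℕ) (hd : 1 ≤ d) (q : ℝ) : q ^ d = q * q ^ (d - 1) := by
  conv_lhs => rw [show d = (d - 1) + 1 by omega]
  rw [pow_succ]; ring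

lemma key_step (x dd A0 B0 A1 B1 P0 P1 : ℝ) (hx : 0 < x) (hdd : 0 < dd)
    (hP0 : 0 < P0) (hP1 : 0 < P1)
    (ea1 : A1 = (B0 + x * A0) * P0)
    (eb1 : B1 = (B0 + x * A0) * P0 + x * (dd * B0 * P0))
    (ih : A1 * B0 < A0 * B1) :
    (B1 + x * A1) * P1 * B1 < A1 * ((B1 + x * A1) * P1 + x * (dd * B1 * P1)) := by
  have diff : A1 * ((B1 + x * A1) * P1 + x * (dd * B1 * P1))
      - (B1 + x * A1) * P1 * B1
      = P1 * (x * dd * P0 * (x * (A0 * B1 - A1 * B0))) := by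
    rw [ea1, eb1]; ring
  have hIH : 0 < A0 * B1 - A1 * B0 := by linarith
  have hpos : 0 < P1 * (x * dd * P0 * (x * (A0 * B1 - A1 * B0))) := by positivity
  linarith

lemma key (d : ℕ) (hd : 1 ≤ d) (x : ℝ) (hx : 0 < x) :
    ∀ h, M0 (subdiv (C d (h+1))) x * M (subdiv (C d h)) x
        < M0 (subdiv (C d h)) x * M (subdiv (C d (h+1))) x := by
  have hdpos : (0:ℝ) < d := by exact_mod_cast hd
  intro h
  induction h with
  | zero =>
    have hA0 : M0 (subdiv (C d 0)) x = 1 := by simp [M0, MM_subdiv_C_zero]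
    have hB0 : M (subdiv (C d 0)) x = 1 := by simp [M, M0, M1, MM_subdiv_C_zero]
    rw [M0_succ, M_succ, hA0, hB0]
    have : (0:ℝ) < x * (d * 1 * (1 + x * 1) ^ (d-1)) := by positivity
    nlinarith
  | succ k ih =>
    obtain ⟨hA0pos, hA0le⟩ := A_pos_B_pos d x hx k
    obtain ⟨hA1pos, hA1le⟩ := A_pos_B_pos d x hx (k+1)
    have hB0pos := lt_of_lt_of_le hA0pos hA0le
    have hB1pos := lt_of_lt_of_le hA1pos hA1le
    have hP1pos : (0:ℝ) < (M (subdiv (C d (k+1))) x + x * M0 (subdiv (C d (k+1))) x) ^ (d-1) := by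
      positivity
    have hP0pos : (0:ℝ) < (M (subdiv (C d k)) x + x * M0 (subdiv (C d k)) x) ^ (d-1) := by
      positivity
    rw [M0_succ d (k+1), M_succ d (k+1), pow_eq d hd]
    exact key_step x d _ _ _ _ ((M (subdiv (C d k)) x + x * M0 (subdiv (C d k)) x) ^ (d-1)) _
      hx hdpos hP0pos hP1pos
      (by rw [M0_succ, pow_eq d hd])
      (by rw [M_succ, pow_eq d hd])
      ih

end RTree

open RTree in
/-- Lemma 3.1, monotonicity: `τ(S(C_h),x) < τ(S(C_{h-1}),x)` for all `h ≥ 2`, `x > 0`. -/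
theorem tau_subdiv_completeAry_strictAnti (d : ℕ) (hd : 1 ≤ d) (x : ℝ) (hx : 0 < x)
    (h : ℕ) :
    tau (subdiv (C d (h + 1))) x < tau (subdiv (C d h)) x := by
  obtain ⟨hA0pos, hA0le⟩ := A_pos_B_pos d x hx h
  obtain ⟨hA1pos, hA1le⟩ := A_pos_B_pos d x hx (h+1)
  have hB0pos := lt_of_lt_of_le hA0pos hA0le
  have hB1pos := lt_of_lt_of_le hA1pos hA1le
  rw [tau, tau, div_lt_div_iff₀ hB1pos hB0pos]
  exact key d hd x hx h
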